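/- Decomposition lemma (uniqueness part): Given a solder 1-form e = e^i X_i and a connection 1-form a = a^i X_i on M×SO(3), the data (f, a, e) with f > 0 is uniquely determined by the 3-form ψ = −f e^{123} + e^1∧a^{23} + e^2∧a^{31} + e^3∧a^{12}; i.e., if (f,a,e) and (f',a',e') both yield the same SO(3)-invariant definite 3-form vanishing along the fibers, then f = f', a = a', e = e'. -/
import Mathlib


set_option synthInstance.maxHeartbeats 1000000
set_option maxHeartbeats 1000000

noncomputable section

/-- The tangent space at a point of `M × SO(3)`: the first factor is the vertical
(fiber) direction, identified with `so(3) ≅ ℝ³` by the chosen basis `{X₁,X₂,X₃}`,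
the second a complement. -/
abbrev T6 : Type := (Fin 3 → ℝ) × (Fin 3 → ℝ)

open ExteriorAlgebra

/-- `ψ = −f e^{123} + e^1∧a^{23} + e^2∧a^{31} + e^3∧a^{12}` in the exterior algebra of
the dual. -/
def psiOf (f : ℝ) (a e : Fin 3 → Module.Dual ℝ T6) : ExteriorAlgebra ℝ (Module.Dual ℝ T6) :=
  -(f • (ι ℝ (e 0) * ι ℝ (e 1) * ι ℝ (e 2)))
    + ι ℝ (e 0) * ι ℝ (a 1) * ι ℝ (a 2)
    + ι ℝ (e 1) * ι ℝ (a 2) * ι ℝ (a 0)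
    + ι ℝ (e 2) * ι ℝ (a 0) * ι ℝ (a 1)

/-- `a` is a connection form: on the vertical subspace it is the canonical
identification given by the basis of `so(3)`. -/
def IsConn (a : Fin 3 → Module.Dual ℝ T6) : Prop := ∀ i, ∀ x : Fin 3 → ℝ, a i (x, 0) = x i

/-- `e` is a solder form: it is horizontal (vanishes on the vertical subspace) and
`e^{123} ≠ 0`. -/
def IsSolder (e : Fin 3 → Module.Dual ℝ T6) : Prop :=
  (∀ i, ∀ x : Fin 3 → ℝ, e i (x, 0) = 0) ∧ ι ℝ (e 0) * ι ℝ (e 1) * ι ℝ (e 2) ≠ 0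

def evalL (v : Fin 3 → T6) : Module.Dual ℝ T6 →ₗ[ℝ] (Fin 3 → ℝ) :=
  LinearMap.pi fun i => LinearMap.applyₗ (v i)

def evalFam (v : Fin 3 → T6) : ∀ n, (Module.Dual ℝ T6) [⋀^Fin n]→ₗ[ℝ] ℝ
  | 3 => Matrix.detRowAlternating.compLinearMap (evalL v)
  | _ => 0

def evalAt (v : Fin 3 → T6) : ExteriorAlgebra ℝ (Module.Dual ℝ T6) →ₗ[ℝ] ℝ :=
  liftAlternating (evalFam v)

lemma triple_eq_iMulti (p q r : Module.Dual ℝ T6) :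
    ι ℝ p * ι ℝ q * ι ℝ r = ιMulti ℝ 3 ![p, q, r] := by
  simp [ιMulti_apply, List.ofFn_succ, mul_assoc]

lemma evalAt_triple (v : Fin 3 → T6) (p q r : Module.Dual ℝ T6) :
    evalAt v (ι ℝ p * ι ℝ q * ι ℝ r) =
      Matrix.det (Matrix.of fun i j => ![p, q, r] i (v j)) := by
  rw [triple_eq_iMulti, evalAt, liftAlternating_apply_ιMulti]
  rfl

lemma evalAt_psi (v : Fin 3 → T6) (f : ℝ) (a e : Fin 3 → Module.Dual ℝ T6) :
    evalAt v (psiOf f a e) =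
      -(f * Matrix.det (Matrix.of fun i j => ![e 0, e 1, e 2] i (v j)))
      + Matrix.det (Matrix.of fun i j => ![e 0, a 1, a 2] i (v j))
      + Matrix.det (Matrix.of fun i j => ![e 1, a 2, a 0] i (v j))
      + Matrix.det (Matrix.of fun i j => ![e 2, a 0, a 1] i (v j)) := by
  rw [psiOf]
  rw [map_add, map_add, map_add, map_neg, map_smul]
  rw [evalAt_triple, evalAt_triple, evalAt_triple, evalAt_triple, smul_eq_mul]

-- expansion of a dual vector on horizontal vectors
lemma horiz_expand (d : Module.Dual ℝ T6) (y : Fin 3 → ℝ) :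
    d (0, y) = ∑ j, y j * d (0, Pi.single j 1) := by
  have h : ((0, y) : T6) = ∑ j, y j • ((0, Pi.single j 1) : T6) := by
    rw [Prod.ext_iff]
    constructor
    · rw [Prod.fst_sum]; simp
    · rw [Prod.snd_sum]
      ext l
      simp [Finset.sum_apply, Pi.single_apply, mul_ite, Finset.sum_ite_eq', eq_comm]
  rw [h, map_sum]
  refine Finset.sum_congr rfl fun j _ => ?_
  rw [← smul_eq_mul, ← map_smul, Prod.smul_mk, smul_zero]

lemma vert_horiz_split (d : Module.Dual ℝ T6) (x y : Fin 3 → ℝ) :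
    d (x, y) = d (x, 0) + d (0, y) := by
  rw [← map_add, Prod.mk_add_mk, add_zero, zero_add]

lemma solder_det_ne (e : Fin 3 → Module.Dual ℝ T6)
    (h0 : ∀ i, ∀ x : Fin 3 → ℝ, e i (x, 0) = 0)
    (hne : ι ℝ (e 0) * ι ℝ (e 1) * ι ℝ (e 2) ≠ 0) :
    (Matrix.of fun i j => e i (0, Pi.single j 1)).det ≠ 0 := by
  intro hdet
  apply hne
  have hdep : ¬ LinearIndependent ℝ e := by
    obtain ⟨g, hg0, hg⟩ := Matrix.exists_vecMul_eq_zero_iff.mpr hdet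
    rw [Fintype.linearIndependent_iff]
    push_neg
    refine ⟨g, ?_, Function.ne_iff.mp hg0⟩
    refine LinearMap.ext fun z => ?_
    obtain ⟨x, y⟩ := z
    have expand : ∀ i, e i (x, y) = ∑ l, y l * e i (0, Pi.single l 1) := by
      intro i
      rw [vert_horiz_split, h0, zero_add, horiz_expand]
    simp only [LinearMap.coe_sum, Finset.sum_apply, LinearMap.smul_apply, smul_eq_mul,
      LinearMap.zero_apply]
    calc ∑ i, g i * e i (x, y) = ∑ i, ∑ l, y l * (g i * e i (0, Pi.single l 1)) := by
          simp only [expand, Finset.mul_sum]; congr 1; ext i; congr 1; ext l; ring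
      _ = ∑ l, y l * (Matrix.vecMul g (Matrix.of fun i j => e i (0, Pi.single j 1))) l := by
          rw [Finset.sum_comm]
          refine Finset.sum_congr rfl fun l _ => ?_
          simp [Matrix.vecMul, dotProduct, Finset.mul_sum, mul_comm, mul_left_comm]
      _ = 0 := by simp [hg]
  have h := AlternatingMap.map_linearDependent (ExteriorAlgebra.ιMulti ℝ 3) e hdep
  rw [triple_eq_iMulti]
  have : ![e 0, e 1, e 2] = e := by
    funext i
    fin_cases i <;> rfl
  rw [this, h]

def Em (e : Fin 3 → Module.Dual ℝ T6) : Matrix (Fin 3) (Fin 3) ℝ :=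
  Matrix.of fun i j => e i (0, Pi.single j 1)

def uv (e : Fin 3 → Module.Dual ℝ T6) (j : Fin 3) : T6 := (0, fun l => (Em e)⁻¹ l j)

lemma e_uv (e : Fin 3 → Module.Dual ℝ T6) (hdet : (Em e).det ≠ 0) (i j : Fin 3) :
    e i (uv e j) = if i = j then 1 else 0 := by
  have h1 : Em e * (Em e)⁻¹ = 1 := Matrix.mul_nonsing_inv _ (isUnit_iff_ne_zero.mpr hdet)
  calc e i (uv e j) = ∑ l, (Em e)⁻¹ l j * e i (0, Pi.single l 1) := horiz_expand _ _
    _ = (Em e * (Em e)⁻¹) i j := by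
        rw [Matrix.mul_apply]
        exact Finset.sum_congr rfl fun l _ => mul_comm _ _
    _ = if i = j then 1 else 0 := by rw [h1, Matrix.one_apply]

lemma horiz_only_expand (e : Fin 3 → Module.Dual ℝ T6) (hdet : (Em e).det ≠ 0)
    (d : Module.Dual ℝ T6) (hd : ∀ x : Fin 3 → ℝ, d (x, 0) = 0) (x y : Fin 3 → ℝ) :
    d (x, y) = ∑ j, (∑ l, Em e j l * y l) * d (uv e j) := by
  have h1 : (Em e)⁻¹ * Em e = 1 := Matrix.nonsing_inv_mul _ (isUnit_iff_ne_zero.mpr hdet)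
  have hduv : ∀ j, d (uv e j) = ∑ m, (Em e)⁻¹ m j * d (0, Pi.single m 1) :=
    fun j => horiz_expand _ _
  rw [vert_horiz_split, hd, zero_add, horiz_expand]
  symm
  calc ∑ j, (∑ l, Em e j l * y l) * d (uv e j)
      = ∑ j, ∑ m, ((∑ l, Em e j l * y l) * (Em e)⁻¹ m j) * d (0, Pi.single m 1) := by
        refine Finset.sum_congr rfl fun j _ => ?_
        rw [hduv j, Finset.mul_sum]
        exact Finset.sum_congr rfl fun m _ => by ring
    _ = ∑ m, (∑ j, (Em e)⁻¹ m j * ∑ l, Em e j l * y l) * d (0, Pi.single m 1) := by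
        rw [Finset.sum_comm]
        refine Finset.sum_congr rfl fun m _ => ?_
        rw [Finset.sum_mul]
        exact Finset.sum_congr rfl fun j _ => by ring
    _ = ∑ m, y m * d (0, Pi.single m 1) := by
        refine Finset.sum_congr rfl fun m _ => ?_
        congr 1
        have h2 : (Em e)⁻¹.mulVec ((Em e).mulVec y) = y := by
          rw [Matrix.mulVec_mulVec, h1, Matrix.one_mulVec]
        have h3 := congrFun h2 m
        simpa [Matrix.mulVec, dotProduct] using h3

/-- uniqueness in the decomposition lemma, pointwise form: the data
`(f, a, e)` with `f > 0`, `a` a connection form and `e` a solder form is uniquely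
determined by the 3-form `ψ = −f e^{123} + e^1∧a^{23} + e^2∧a^{31} + e^3∧a^{12}`. -/
theorem stmt_9 (f f' : ℝ) (hf : 0 < f) (hf' : 0 < f')
    (a a' e e' : Fin 3 → Module.Dual ℝ T6)
    (ha : IsConn a) (ha' : IsConn a') (he : IsSolder e) (he' : IsSolder e')
    (hpsi : psiOf f a e = psiOf f' a' e') :
    f = f' ∧ a = a' ∧ e = e' := by
  obtain ⟨he0, hene⟩ := he
  obtain ⟨he0', hene'⟩ := he'
  have key : ∀ v : Fin 3 → T6, evalAt v (psiOf f a e) = evalAt v (psiOf f' a' e') :=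
    fun v => by rw [hpsi]
  set V : Fin 3 → T6 := fun j => (Pi.single j 1, 0) with hV
  have hav : ∀ i j : Fin 3, a i (V j) = if j = i then 1 else 0 := fun i j => by
    rw [hV, ha i]; simp [Pi.single_apply, eq_comm]
  have hav' : ∀ i j : Fin 3, a' i (V j) = if j = i then 1 else 0 := fun i j => by
    rw [hV, ha' i]; simp [Pi.single_apply, eq_comm]
  have hev : ∀ i j : Fin 3, e i (V j) = 0 := fun i j => he0 i _
  have hev' : ∀ i j : Fin 3, e' i (V j) = 0 := fun i j => he0' i _
  -- Phase 1 : e = e'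
  have he_eq : e = e' := by
    have horiz : ∀ i : Fin 3, ∀ y : Fin 3 → ℝ, e i (0, y) = e' i (0, y) := by
      intro i y
      fin_cases i
      · have h := key ![V 1, V 2, ((0 : Fin 3 → ℝ), y)]
        rw [evalAt_psi, evalAt_psi] at h
        simp [Matrix.det_fin_three, hav, hav', hev, hev'] at h
        exact h
      · have h := key ![V 2, V 0, ((0 : Fin 3 → ℝ), y)]
        rw [evalAt_psi, evalAt_psi] at h
        simp [Matrix.det_fin_three, hav, hav', hev, hev'] at h
        exact h
      · have h := key ![V 0, V 1, ((0 : Fin 3 → ℝ), y)]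
        rw [evalAt_psi, evalAt_psi] at h
        simp [Matrix.det_fin_three, hav, hav', hev, hev'] at h
        exact h
    funext i
    refine LinearMap.ext fun z => ?_
    obtain ⟨x, y⟩ := z
    rw [vert_horiz_split (e i) x y, vert_horiz_split (e' i) x y, he0, he0', horiz]
  subst he_eq
  have hdet : (Em e).det ≠ 0 := solder_det_ne e he0 hene
  have heuv : ∀ i j : Fin 3, e i (uv e j) = if i = j then 1 else 0 := e_uv e hdet
  have h1 := key ![V 0, uv e 1, uv e 2]
  rw [evalAt_psi, evalAt_psi] at h1
  simp [Matrix.det_fin_three, hav, hav', hev, heuv] at h1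
  have h2 := key ![V 0, uv e 1, uv e 0]
  rw [evalAt_psi, evalAt_psi] at h2
  simp [Matrix.det_fin_three, hav, hav', hev, heuv] at h2
  have h3 := key ![V 0, uv e 2, uv e 0]
  rw [evalAt_psi, evalAt_psi] at h3
  simp [Matrix.det_fin_three, hav, hav', hev, heuv] at h3
  have h4 := key ![V 1, uv e 2, uv e 0]
  rw [evalAt_psi, evalAt_psi] at h4
  simp [Matrix.det_fin_three, hav, hav', hev, heuv] at h4
  have h5 := key ![V 1, uv e 2, uv e 1]
  rw [evalAt_psi, evalAt_psi] at h5
  simp [Matrix.det_fin_three, hav, hav', hev, heuv] at h5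
  have h6 := key ![V 1, uv e 0, uv e 1]
  rw [evalAt_psi, evalAt_psi] at h6
  simp [Matrix.det_fin_three, hav, hav', hev, heuv] at h6
  have h7 := key ![V 2, uv e 0, uv e 1]
  rw [evalAt_psi, evalAt_psi] at h7
  simp [Matrix.det_fin_three, hav, hav', hev, heuv] at h7
  have h8 := key ![V 2, uv e 0, uv e 2]
  rw [evalAt_psi, evalAt_psi] at h8
  simp [Matrix.det_fin_three, hav, hav', hev, heuv] at h8
  have h9 := key ![V 2, uv e 1, uv e 2]
  rw [evalAt_psi, evalAt_psi] at h9
  simp [Matrix.det_fin_three, hav, hav', hev, heuv] at h9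
  have hA : ∀ i j : Fin 3, a i (uv e j) = a' i (uv e j) := by
    have H00 : a 0 (uv e 0) = a' 0 (uv e 0) := by linarith
    have H11 : a 1 (uv e 1) = a' 1 (uv e 1) := by linarith
    have H22 : a 2 (uv e 2) = a' 2 (uv e 2) := by linarith
    intro i j
    fin_cases i <;> fin_cases j <;> assumption
  have haa : a = a' := by
    funext i
    refine LinearMap.ext fun z => ?_
    obtain ⟨x, y⟩ := z
    have hd : ∀ x : Fin 3 → ℝ, (a i - a' i) (x, 0) = 0 := fun x => by
      simp [ha i x, ha' i x]
    have hz : (a i - a' i) (x, y) = 0 := by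
      rw [horiz_only_expand e hdet (a i - a' i) hd x y]
      refine Finset.sum_eq_zero fun j _ => ?_
      simp [hA i j]
    simpa [sub_eq_zero] using hz
  subst haa
  have hfin := key ![uv e 0, uv e 1, uv e 2]
  rw [evalAt_psi, evalAt_psi] at hfin
  simp [Matrix.det_fin_three, heuv] at hfin
  exact ⟨by linarith, rfl, rfl⟩

end
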